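/- On ℝ² with f(x) = -(x₁² + x₂²)/2 and u₀ = (0,0): f is (2,-2)-convex, |∂⁻f|(u₀) = 0, and for every p' ∈ (2,∞), setting α := 1 - q'/p' ∈ (0,1) (q' the conjugate of p'), the curve u_θ(t) := ((αt)^{1/α} cos θ, (αt)^{1/α} sin θ) is a p'-curve of maximal slope for f starting from u₀ on [0,∞), for every θ ∈ [0, 2π). In particular p'-curves of maximal slope starting from u₀ are not unique for p' > 2, while the constant curve is a p'-curve of maximal slope for every p' ∈ (1, 2]. -/

import Mathlib

open Filter MeasureTheory Set Topology ENNReal NNReal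

noncomputable section

variable {S : Type*} [MetricSpace S]

/-- The metric derivative of a curve `u` at time `t` is `m`. -/
def HasMetricDerivAt (u : ℝ → S) (t m : ℝ) : Prop :=
  Tendsto (fun s => dist (u s) (u t) / |s - t|) (𝓝[≠] t) (𝓝 m)

/-- `v` is an absolutely continuous curve on `I` with (a.e.) metric derivative `dv`,
integrable on `I`, controlling distances. -/
def IsACCurveOn (v : ℝ → S) (I : Set ℝ) (dv : ℝ → ℝ) : Prop :=
  (∀ t ∈ I, 0 ≤ dv t) ∧ IntegrableOn dv I ∧
  (∀ s ∈ I, ∀ t ∈ I, s ≤ t → dist (v s) (v t) ≤ ∫ r in s..t, dv r) ∧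
  (∀ᵐ t ∂(volume.restrict I), HasMetricDerivAt v t (dv t))

/-- The local (descending) slope `|∂⁻ f|`, valued in `ℝ≥0∞`. -/
def slope' (f : S → EReal) (v : S) : ℝ≥0∞ :=
  if f v = ⊤ then ⊤
  else Filter.limsup (fun w => ENNReal.ofReal ((f v - f w).toReal) / edist v w) (𝓝[≠] v)

/-- `g` is a strong upper gradient for `f`. -/
def StrongUpperGradient (f : S → EReal) (g : S → ℝ≥0∞) : Prop :=
  ∀ (I : Set ℝ) (v : ℝ → S) (dv : ℝ → ℝ), IsACCurveOn v I dv →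
    (∀ t ∈ I, f (v t) ≠ ⊤) →
    AEMeasurable (fun t => g (v t)) (volume.restrict I) ∧
    ∀ s ∈ I, ∀ t ∈ I, s ≤ t →
      ENNReal.ofReal |(f (v t)).toReal - (f (v s)).toReal| ≤
        ∫⁻ r in Set.Ioc s t, g (v r) * ENNReal.ofReal (dv r)

/-- The interval `[0, a)` (with `a ∈ (0, ∞]`) as a subset of `ℝ`. -/
def Icoe (a : ℝ≥0∞) : Set ℝ := {t : ℝ | 0 ≤ t ∧ ENNReal.ofReal t < a}

/-- `u` is a `p`-curve of maximal slope for `f` on `[0,a)` starting from `u₀`,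
with metric derivative `du` and non-increasing a.e. representative `φ` of `f ∘ u`. -/
structure IsCMS (f : S → EReal) (p q : ℝ) (a : ℝ≥0∞) (u₀ : S)
    (u : ℝ → S) (du : ℝ → ℝ) (φ : ℝ → ℝ) : Prop where
  init : u 0 = u₀
  dom : f u₀ ≠ ⊤
  ac : ∀ T : ℝ, Set.Icc 0 T ⊆ Icoe a → IsACCurveOn u (Set.Icc 0 T) du
  anti : AntitoneOn φ (Icoe a)
  eq_ae : ∀ᵐ t ∂(volume.restrict (Icoe a)), (φ t : EReal) = f (u t)
  ineq : ∀ᵐ t ∂(volume.restrict (Icoe a)), ∃ φ' : ℝ,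
    HasDerivWithinAt φ φ' (Icoe a) t ∧
    (φ' : EReal) ≤ -(((1/p) * du t ^ p : ℝ) : EReal)
      - (((1/q : ℝ)) : EReal) * ((slope' f (u t) ^ q : ℝ≥0∞) : EReal)

/-- `f` is `(p, λ)`-convex. -/
def PLConvex (f : S → EReal) (p lam : ℝ) : Prop :=
  ∃ ψ : ℝ → ℝ, (∀ t ∈ Set.Icc (0:ℝ) 1, ψ t ∈ Set.Icc (0:ℝ) 1) ∧
    Tendsto ψ (𝓝[>] (0:ℝ)) (𝓝 0) ∧ (∃ t ∈ Set.Ioo (0:ℝ) 1, ψ t < 1) ∧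
    ∀ v₀ v₁ : S, ∃ γ : ℝ → S, ContinuousOn γ (Set.Icc 0 1) ∧ γ 0 = v₀ ∧ γ 1 = v₁ ∧
      (∀ t ∈ Set.Icc (0:ℝ) 1, dist (γ t) (γ 0) ≤ t * dist (γ 1) (γ 0)) ∧
      (∀ t ∈ Set.Icc (0:ℝ) 1,
        f (γ t) ≤ ((1 - t : ℝ) : EReal) * f (γ 0) + ((t : ℝ) : EReal) * f (γ 1)
          - ((lam * t * (1 - ψ t) * dist (γ 0) (γ 1) ^ p : ℝ) : EReal))

/-- The supremum of times at which the slope along `u` is positive. -/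
def tstar (f : S → EReal) (u : ℝ → S) (a : ℝ≥0∞) : ℝ≥0∞ :=
  ⨆ t ∈ {t | t ∈ Icoe a ∧ 0 < slope' f (u t)}, ENNReal.ofReal t
lemma slope_eq (v : EuclideanSpace ℝ (Fin 2)) :
    slope' (fun v => ((-(1 / 2) * ‖v‖ ^ 2 : ℝ) : EReal)) v = ENNReal.ofReal ‖v‖ := by
  rw [slope', if_neg (EReal.coe_ne_top _)]
  have hsimp : ∀ w : EuclideanSpace ℝ (Fin 2),
      (((-(1 / 2) * ‖v‖ ^ 2 : ℝ) : EReal) - ((-(1 / 2) * ‖w‖ ^ 2 : ℝ) : EReal)).toReal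
        = (‖w‖ ^ 2 - ‖v‖ ^ 2) / 2 := by
    intro w
    rw [← EReal.coe_sub, EReal.toReal_coe]; ring
  have hub : limsup (fun w => ENNReal.ofReal
      (((( -(1 / 2) * ‖v‖ ^ 2 : ℝ) : EReal) - ((-(1 / 2) * ‖w‖ ^ 2 : ℝ) : EReal)).toReal) / edist v w)
      (𝓝[≠] v) ≤ ENNReal.ofReal ‖v‖ := by
    have hh : Tendsto (fun w : EuclideanSpace ℝ (Fin 2) => ENNReal.ofReal ((‖v‖ + ‖w‖) / 2))
        (𝓝[≠] v) (𝓝 (ENNReal.ofReal ‖v‖)) := by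
      have : Tendsto (fun w : EuclideanSpace ℝ (Fin 2) => ENNReal.ofReal ((‖v‖ + ‖w‖) / 2))
          (𝓝 v) (𝓝 (ENNReal.ofReal ((‖v‖ + ‖v‖) / 2))) := by
        exact (ENNReal.continuous_ofReal.comp (by fun_prop)).continuousAt.tendsto
      simpa [add_self_div_two] using this.mono_left nhdsWithin_le_nhds
    refine le_trans (limsup_le_limsup ?_) hh.limsup_eq.le
    filter_upwards [self_mem_nhdsWithin] with w hw
    rw [hsimp w]
    have hd : 0 < dist v w := dist_pos.2 (Ne.symm hw)
    have h1 : (‖w‖ ^ 2 - ‖v‖ ^ 2) / 2 ≤ dist v w * ((‖v‖ + ‖w‖) / 2) := by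
      have h2 : ‖w‖ - ‖v‖ ≤ dist v w := by
        rw [dist_eq_norm, norm_sub_rev]; exact norm_sub_norm_le _ _
      nlinarith [norm_nonneg v, norm_nonneg w]
    calc ENNReal.ofReal ((‖w‖ ^ 2 - ‖v‖ ^ 2) / 2) / edist v w
        ≤ ENNReal.ofReal (dist v w * ((‖v‖ + ‖w‖) / 2)) / edist v w := by
          exact ENNReal.div_le_div_right (ENNReal.ofReal_le_ofReal h1) _
      _ = ENNReal.ofReal ((‖v‖ + ‖w‖) / 2) := by
          rw [edist_dist, ENNReal.ofReal_mul hd.le, mul_comm, mul_div_assoc,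
            ENNReal.div_self (ENNReal.ofReal_pos.2 hd).ne' ENNReal.ofReal_ne_top, mul_one]
  refine le_antisymm hub ?_
  rcases eq_or_ne v 0 with rfl | hv
  · simp
  -- lower bound along the curve s ↦ (1+s) • v
  have hvn : 0 < ‖v‖ := norm_pos_iff.2 hv
  set c : ℝ → EuclideanSpace ℝ (Fin 2) := fun s => (1 + s) • v with hc
  have hmap : Tendsto c (𝓝[>] (0:ℝ)) (𝓝[≠] v) := by
    apply tendsto_nhdsWithin_of_tendsto_nhds_of_eventually_within
    · have hcont : Continuous c := by rw [hc]; fun_prop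
      have : Tendsto c (𝓝 (0:ℝ)) (𝓝 (c 0)) := hcont.continuousAt.tendsto
      simp only [hc, add_zero, one_smul] at this
      exact this.mono_left nhdsWithin_le_nhds
    · filter_upwards [self_mem_nhdsWithin] with s hs
      simp only [mem_compl_iff, mem_singleton_iff, hc]
      intro h
      have h2 : s • v = (1 + s) • v - v := by module
      rw [h, sub_self] at h2
      exact (smul_ne_zero (ne_of_gt hs) hv) h2
  have hten : Tendsto (fun s : ℝ => (ENNReal.ofReal
      (((( -(1 / 2) * ‖v‖ ^ 2 : ℝ) : EReal) - ((-(1 / 2) * ‖c s‖ ^ 2 : ℝ) : EReal)).toReal) / edist v (c s)))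
      (𝓝[>] (0:ℝ)) (𝓝 (ENNReal.ofReal ‖v‖)) := by
    have heq : ∀ᶠ s in 𝓝[>] (0:ℝ), ENNReal.ofReal
        (((( -(1 / 2) * ‖v‖ ^ 2 : ℝ) : EReal) - ((-(1 / 2) * ‖c s‖ ^ 2 : ℝ) : EReal)).toReal) / edist v (c s)
        = ENNReal.ofReal ((2 + s) * ‖v‖ / 2) := by
      filter_upwards [self_mem_nhdsWithin, Ioo_mem_nhdsGT_of_mem (by norm_num : (0:ℝ) ∈ Ico 0 1)]
        with s hs hs1
      rw [hsimp (c s)]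
      have hcs : ‖c s‖ = (1 + s) * ‖v‖ := by
        rw [hc, norm_smul, Real.norm_eq_abs, abs_of_pos (by linarith [hs1.1])]
      have hed : edist v (c s) = ENNReal.ofReal (s * ‖v‖) := by
        rw [edist_dist, dist_eq_norm]
        congr 1
        have : v - c s = (-s) • v := by
          rw [hc]; module
        rw [this, norm_smul, Real.norm_eq_abs, abs_neg, abs_of_pos hs]
      have hs0 : (s:ℝ) ≠ 0 := ne_of_gt hs
      have hv0 : ‖v‖ ≠ 0 := ne_of_gt hvn
      rw [hed, ← ENNReal.ofReal_div_of_pos (mul_pos hs hvn)]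
      congr 1
      rw [hcs]
      field_simp
      ring
    have : Tendsto (fun s : ℝ => ENNReal.ofReal ((2 + s) * ‖v‖ / 2)) (𝓝[>] (0:ℝ))
        (𝓝 (ENNReal.ofReal ((2 + 0) * ‖v‖ / 2))) :=
      ((ENNReal.continuous_ofReal.comp (by fun_prop)).continuousAt.tendsto).mono_left nhdsWithin_le_nhds
    have heq' : (fun s : ℝ => ENNReal.ofReal ((2 + s) * ‖v‖ / 2)) =ᶠ[𝓝[>] (0:ℝ)]
        (fun s : ℝ => ENNReal.ofReal
          (((( -(1 / 2) * ‖v‖ ^ 2 : ℝ) : EReal) - ((-(1 / 2) * ‖c s‖ ^ 2 : ℝ) : EReal)).toReal) / edist v (c s)) :=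
      Filter.EventuallyEq.symm heq
    refine Tendsto.congr' heq' ?_
    simpa using this
  calc ENNReal.ofReal ‖v‖
      = limsup (fun w => ENNReal.ofReal
          (((( -(1 / 2) * ‖v‖ ^ 2 : ℝ) : EReal) - ((-(1 / 2) * ‖w‖ ^ 2 : ℝ) : EReal)).toReal) / edist v w)
          (map c (𝓝[>] (0:ℝ))) := by
        rw [← Filter.limsup_comp]
        have : (map c (𝓝[>] (0:ℝ))).NeBot := Filter.map_neBot
        exact hten.limsup_eq.symm
    _ ≤ _ := limsup_le_limsup_of_le hmap

lemma Icoe_top : Icoe ⊤ = Set.Ici (0:ℝ) := by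
  ext t; simp [Icoe, ENNReal.ofReal_lt_top]

lemma cont_aux {α c : ℝ} (hc : 0 < c) : Continuous (fun t : ℝ => (α * t) ^ c) := by
  rw [continuous_iff_continuousAt]
  intro t
  exact (Real.continuousAt_rpow_const _ _ (Or.inr hc.le)).comp
    ((continuous_const.mul continuous_id).continuousAt)

lemma isCMS_curve (p' q' : ℝ) (hp : 2 < p') (hpq : 1 / p' + 1 / q' = 1)
    (e : EuclideanSpace ℝ (Fin 2)) (he : ‖e‖ = 1) :
    ∃ du φ : ℝ → ℝ,
      IsCMS (fun v : EuclideanSpace ℝ (Fin 2) => ((-(1 / 2) * ‖v‖ ^ 2 : ℝ) : EReal)) p' q' ⊤ 0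
        (fun t => (((1 - q' / p') * t) ^ (1 / (1 - q' / p'))) • e) du φ := by
  have hp0 : (0:ℝ) < p' := by linarith
  have hp'ne : p' ≠ 0 := ne_of_gt hp0
  have hq'ne : q' ≠ 0 := by
    intro h
    subst h
    have : p' = 1 := by field_simp at hpq; simp at hpq; linarith
    linarith
  have key : p' + q' = p' * q' := by
    field_simp at hpq; linarith
  have hq1 : 1 < q' := by nlinarith
  have hq2 : q' < 2 := by nlinarith
  set α : ℝ := 1 - q' / p' with hαdef
  have hαq : α = 2 - q' := by
    have h1 : q' / p' = q' - 1 := by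
      rw [div_eq_iff hp'ne]; nlinarith
    rw [hαdef, h1]; ring
  have hα0 : 0 < α := by rw [hαq]; linarith
  have hα1 : α < 1 := by rw [hαq]; linarith
  have hαne : α ≠ 0 := ne_of_gt hα0
  have hia : 0 < 1/α := by positivity
  -- exponent identities
  have E1 : 1/α + (1/α - 1) = q'/α := by
    have h : q' = 2 - α := by rw [hαq]; ring
    rw [h]
    field_simp
    ring
  have E2 : (1/α - 1) * p' = q'/α := by
    have h1 : 1 - α = q'/p' := by rw [hαdef]; ring
    field_simp
    nlinarith [h1]
  have E3 : (1/α) * q' = q'/α := by ring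
  set r : ℝ → ℝ := fun t => (α * t) ^ (1/α) with hrdef
  set du : ℝ → ℝ := fun t => (α * t) ^ (1/α - 1) with hdudef
  set X : ℝ → ℝ := fun t => (α * t) ^ (q'/α) with hXdef
  set φ : ℝ → ℝ := fun t => -(1/2) * (r t) ^ 2 with hφdef
  have hr0 : r 0 = 0 := by
    simp only [hrdef, mul_zero]
    exact Real.zero_rpow (ne_of_gt hia)
  have hrpos : ∀ t : ℝ, 0 < t → 0 < r t := fun t ht =>
    Real.rpow_pos_of_pos (mul_pos hα0 ht) _
  have hrnn : ∀ t : ℝ, 0 ≤ t → 0 ≤ r t := fun t ht =>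
    Real.rpow_nonneg (mul_nonneg hα0.le ht) _
  have hdunn : ∀ t : ℝ, 0 ≤ t → 0 ≤ du t := fun t ht =>
    Real.rpow_nonneg (mul_nonneg hα0.le ht) _
  have hrmono : ∀ s t : ℝ, 0 ≤ s → s ≤ t → r s ≤ r t := fun s t hs hst =>
    Real.rpow_le_rpow (mul_nonneg hα0.le hs) (mul_le_mul_of_nonneg_left hst hα0.le) hia.le
  have hrcont : Continuous r := cont_aux hia
  have hducont : Continuous du := cont_aux (by linarith [(by rw [hαq]; linarith : α < 1), one_lt_one_div hα0 hα1] : (0:ℝ) < 1/α - 1)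
  have hderiv : ∀ t : ℝ, 0 < t → HasDerivAt r (du t) t := by
    intro t ht
    have h1 : HasDerivAt (fun s : ℝ => α * s) α t := by
      simpa using (hasDerivAt_id t).const_mul α
    have h2 := h1.rpow_const (p := 1/α) (Or.inl (ne_of_gt (mul_pos hα0 ht)))
    have h4 : du t = α * (1/α) * (α * t) ^ (1/α - 1) := by
      rw [hdudef]; field_simp
    rw [h4]
    exact h2
  have hderivφ : ∀ t : ℝ, 0 < t → HasDerivAt φ (-(X t)) t := by
    intro t ht
    have h1 := ((hderiv t ht).pow 2).const_mul (-(1/2) : ℝ)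
    have h2 : -(1/2) * ((2:ℕ) * r t ^ (2-1) * du t) = -(X t) := by
      have : r t * du t = X t := by
        rw [hrdef, hdudef, hXdef, ← Real.rpow_add (mul_pos hα0 ht), E1]
      simp only [pow_one, Nat.cast_ofNat]
      nlinarith [this]
    rw [h2] at h1
    exact h1
  have hdist : ∀ s t : ℝ, dist (r s • e) (r t • e) = |r s - r t| := by
    intro s t
    rw [dist_eq_norm, ← sub_smul, norm_smul, he, mul_one, Real.norm_eq_abs]
  have hXnn : ∀ t : ℝ, 0 ≤ t → 0 ≤ X t := fun t ht =>
    Real.rpow_nonneg (mul_nonneg hα0.le ht) _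
  refine ⟨du, φ, ?_, ?_, ?_, ?_, ?_, ?_⟩
  · show r 0 • e = 0
    rw [hr0, zero_smul]
  · exact EReal.coe_ne_top _
  · intro T _
    refine ⟨fun t ht => hdunn t ht.1, hducont.integrableOn_Icc, ?_, ?_⟩
    · intro s hs t ht hst
      have heq : ∫ x in s..t, du x = r t - r s := by
        apply intervalIntegral.integral_eq_sub_of_hasDeriv_right_of_le hst
          hrcont.continuousOn
          (fun x hx => ((hderiv x (lt_of_le_of_lt hs.1 hx.1)).hasDerivWithinAt))
          (hducont.intervalIntegrable s t)
      rw [heq]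
      show dist (r s • e) (r t • e) ≤ _
      rw [hdist, abs_sub_comm, abs_of_nonneg (sub_nonneg.2 (hrmono s t hs.1 hst))]
    · have h0 : ∀ᵐ t ∂(volume.restrict (Icc (0:ℝ) T)), t ≠ 0 := by
        refine ae_restrict_of_ae ?_
        rw [ae_iff]
        have : {a : ℝ | ¬a ≠ 0} = {0} := by ext x; simp
        rw [this]
        exact measure_singleton 0
      filter_upwards [h0, ae_restrict_mem measurableSet_Icc] with t ht0 htI
      have htpos : 0 < t := lt_of_le_of_ne htI.1 (Ne.symm ht0)
      have hslope := hasDerivAt_iff_tendsto_slope.1 (hderiv t htpos)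
      have habs : Tendsto (fun s => |_root_.slope r t s|) (𝓝[≠] t) (𝓝 (du t)) := by
        have := hslope.abs
        rwa [abs_of_nonneg (hdunn t htpos.le)] at this
      refine Tendsto.congr ?_ habs
      intro s
      show |_root_.slope r t s| = dist (r s • e) (r t • e) / |s - t|
      rw [hdist, slope_def_field, abs_div]
  · rw [Icoe_top]
    intro s hs t ht hst
    show -(1/2) * r t ^ 2 ≤ -(1/2) * r s ^ 2
    have h1 := hrmono s t hs hst
    have h2 := hrnn s hs
    nlinarith
  · apply Filter.Eventually.of_forall
    intro t
    show ((-(1/2) * r t ^ 2 : ℝ) : EReal) = ((-(1 / 2) * ‖r t • e‖ ^ 2 : ℝ) : EReal)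
    congr 1
    rw [norm_smul, he, mul_one, Real.norm_eq_abs, sq_abs]
  · have h0 : ∀ᵐ t ∂(volume.restrict (Icoe (⊤:ℝ≥0∞))), t ≠ 0 := by
      refine ae_restrict_of_ae ?_
      rw [ae_iff]
      have : {a : ℝ | ¬a ≠ 0} = {0} := by ext x; simp
      rw [this]
      exact measure_singleton 0
    have hIm : MeasurableSet (Icoe (⊤:ℝ≥0∞)) := by rw [Icoe_top]; exact measurableSet_Ici
    filter_upwards [h0, ae_restrict_mem hIm] with t ht0 htI
    rw [Icoe_top] at htI
    have htpos : 0 < t := lt_of_le_of_ne htI (Ne.symm ht0)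
    refine ⟨-(X t), ((hderivφ t htpos).hasDerivWithinAt), ?_⟩
    have hdu : du t ^ p' = X t := by
      show ((α * t) ^ (1/α - 1)) ^ p' = (α * t) ^ (q'/α)
      rw [← Real.rpow_mul (mul_nonneg hα0.le htpos.le), E2]
    have hnorm : ‖r t • e‖ = r t := by
      rw [norm_smul, he, mul_one, Real.norm_eq_abs, abs_of_nonneg (hrnn t htpos.le)]
    have hsl : slope' (fun v : EuclideanSpace ℝ (Fin 2) =>
        ((-(1 / 2) * ‖v‖ ^ 2 : ℝ) : EReal)) ((α * t) ^ (1/α) • e) = ENNReal.ofReal (r t) := by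
      rw [slope_eq]
      exact congrArg ENNReal.ofReal hnorm
    have hslq : (ENNReal.ofReal (r t)) ^ q' = ENNReal.ofReal (X t) := by
      rw [ENNReal.ofReal_rpow_of_pos (hrpos t htpos)]
      congr 1
      show ((α * t) ^ (1/α)) ^ q' = (α * t) ^ (q'/α)
      rw [← Real.rpow_mul (mul_nonneg hα0.le htpos.le), E3]
    show ((-(X t) : ℝ) : EReal) ≤ _
    rw [hdu, hsl, hslq, EReal.coe_ennreal_ofReal, max_eq_left (hXnn t htpos.le),
      ← EReal.coe_mul, ← EReal.coe_neg, ← EReal.coe_sub, EReal.coe_le_coe_iff]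
    have hsum : 1/p' * X t + 1/q' * X t = X t := by rw [← add_mul, hpq, one_mul]
    linarith

open RealInnerProductSpace in
lemma plconvex_f :
    PLConvex (fun v : EuclideanSpace ℝ (Fin 2) => ((-(1 / 2) * ‖v‖ ^ 2 : ℝ) : EReal)) 2 (-2) := by
  refine ⟨fun _ => 0, fun t _ => by norm_num, tendsto_const_nhds,
    ⟨1/2, by norm_num, by norm_num⟩, ?_⟩
  intro v₀ v₁
  have hg0 : (fun t : ℝ => v₀ + t • (v₁ - v₀)) 0 = v₀ := by simp
  have hg1 : (fun t : ℝ => v₀ + t • (v₁ - v₀)) 1 = v₁ := by simp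
  refine ⟨fun t => v₀ + t • (v₁ - v₀), by fun_prop, hg0, hg1, ?_, ?_⟩
  · intro t ht
    rw [hg0, hg1]
    show dist (v₀ + t • (v₁ - v₀)) v₀ ≤ t * dist v₁ v₀
    rw [dist_eq_norm, dist_eq_norm, add_sub_cancel_left, norm_smul, Real.norm_eq_abs,
      abs_of_nonneg ht.1]
  · intro t ht
    rw [hg0, hg1]
    show ((-(1 / 2) * ‖v₀ + t • (v₁ - v₀)‖ ^ 2 : ℝ) : EReal) ≤
      ((1 - t : ℝ) : EReal) * ((-(1 / 2) * ‖v₀‖ ^ 2 : ℝ) : EReal)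
        + ((t : ℝ) : EReal) * ((-(1 / 2) * ‖v₁‖ ^ 2 : ℝ) : EReal)
        - (((-2) * t * (1 - 0) * dist v₀ v₁ ^ 2 : ℝ) : EReal)
    rw [← EReal.coe_mul, ← EReal.coe_mul, ← EReal.coe_add, ← EReal.coe_sub,
      EReal.coe_le_coe_iff, dist_eq_norm]
    rw [show ‖v₀ - v₁‖ ^ (2:ℝ) = ‖v₀ - v₁‖ ^ (2:ℕ) by rw [← Real.rpow_natCast]; norm_num]
    have hA : ‖v₀ - v₁‖ ^ 2 = ‖v₀‖ ^ 2 - 2 * ⟪v₀, v₁⟫ + ‖v₁‖ ^ 2 := norm_sub_sq_real v₀ v₁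
    have hB : ‖v₀ + t • (v₁ - v₀)‖ ^ 2
        = ‖v₀‖ ^ 2 + 2 * (t * (⟪v₀, v₁⟫ - ‖v₀‖ ^ 2)) + t ^ 2 * ‖v₀ - v₁‖ ^ 2 := by
      rw [norm_add_sq_real, inner_smul_right, inner_sub_right, real_inner_self_eq_norm_sq,
        norm_smul, mul_pow, Real.norm_eq_abs, sq_abs, norm_sub_rev]
    have hC : t * ‖v₀ - v₁‖ ^ 2 = t * (‖v₀‖ ^ 2 - 2 * ⟪v₀, v₁⟫ + ‖v₁‖ ^ 2) := by rw [hA]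
    nlinarith [hB, hC, mul_nonneg ht.1 (sq_nonneg ‖v₀ - v₁‖),
      mul_nonneg (mul_nonneg ht.1 ht.1) (sq_nonneg ‖v₀ - v₁‖)]

lemma isCMS_const (p' q' : ℝ) (hp : 1 < p') (hpq : 1 / p' + 1 / q' = 1) :
    ∃ du φ : ℝ → ℝ,
      IsCMS (fun v : EuclideanSpace ℝ (Fin 2) => ((-(1 / 2) * ‖v‖ ^ 2 : ℝ) : EReal)) p' q' ⊤ 0
        (fun _ => 0) du φ := by
  have hp0 : (0:ℝ) < p' := by linarith
  have hq'inv : 0 < 1 / q' := by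
    have : 1 / p' < 1 := by rw [div_lt_one hp0]; linarith
    linarith
  have hq'pos : 0 < q' := by
    by_contra h
    push_neg at h
    have : 1 / q' ≤ 0 := by
      rcases eq_or_lt_of_le h with h' | h'
      · rw [h']; norm_num
      · exact le_of_lt (div_neg_of_pos_of_neg one_pos h')
    linarith
  refine ⟨fun _ => 0, fun _ => 0, rfl, EReal.coe_ne_top _, ?_, ?_, ?_, ?_⟩
  · intro T _
    refine ⟨fun _ _ => le_refl 0, integrableOn_zero, ?_, ?_⟩
    · intro s _ t _ _
      simp
    · apply Filter.Eventually.of_forall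
      intro t
      show Tendsto (fun s => dist (0 : EuclideanSpace ℝ (Fin 2)) 0 / |s - t|) _ _
      simp only [dist_self, zero_div]
      exact tendsto_const_nhds
  · intro s _ t _ _
    exact le_refl 0
  · apply Filter.Eventually.of_forall
    intro t
    show ((0:ℝ) : EReal) = ((-(1 / 2) * ‖(0 : EuclideanSpace ℝ (Fin 2))‖ ^ 2 : ℝ) : EReal)
    norm_num
  · apply Filter.Eventually.of_forall
    intro t
    refine ⟨0, hasDerivWithinAt_const t _ 0, ?_⟩
    have h1 : slope' (fun v : EuclideanSpace ℝ (Fin 2) => ((-(1 / 2) * ‖v‖ ^ 2 : ℝ) : EReal))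
        (0 : EuclideanSpace ℝ (Fin 2)) = 0 := by
      rw [slope_eq]; simp
    rw [h1, ENNReal.zero_rpow_of_pos hq'pos]
    have h2 : ((0:ℝ):ℝ) ^ p' = 0 := Real.zero_rpow (ne_of_gt hp0)
    rw [h2]
    simp

lemma normE (θ : ℝ) : ‖(WithLp.equiv 2 (Fin 2 → ℝ)).symm ![Real.cos θ, Real.sin θ]‖ = 1 := by
  rw [EuclideanSpace.norm_eq]
  simp only [WithLp.equiv_symm_apply, PiLp.toLp_apply, Fin.sum_univ_two, Matrix.cons_val_zero,
    Matrix.cons_val_one, Matrix.head_cons, Real.norm_eq_abs, sq_abs]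
  rw [Real.cos_sq_add_sin_sq, Real.sqrt_one]

theorem stmt15 :
    let f : EuclideanSpace ℝ (Fin 2) → EReal :=
      fun v => ((-(1 / 2) * ‖v‖ ^ 2 : ℝ) : EReal)
    let e : ℝ → EuclideanSpace ℝ (Fin 2) :=
      fun θ => (WithLp.equiv 2 (Fin 2 → ℝ)).symm ![Real.cos θ, Real.sin θ]
    PLConvex f 2 (-2) ∧
    slope' f 0 = 0 ∧
    (∀ p' q' : ℝ, 2 < p' → 1 / p' + 1 / q' = 1 →
      (0 < 1 - q' / p' ∧ 1 - q' / p' < 1) ∧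
      (∀ θ ∈ Set.Ico 0 (2 * Real.pi), ∃ du φ : ℝ → ℝ,
        IsCMS f p' q' ⊤ 0
          (fun t => (((1 - q' / p') * t) ^ (1 / (1 - q' / p'))) • e θ) du φ) ∧
      (∃ (u₁ u₂ : ℝ → EuclideanSpace ℝ (Fin 2)) (du₁ φ₁ du₂ φ₂ : ℝ → ℝ),
        IsCMS f p' q' ⊤ 0 u₁ du₁ φ₁ ∧ IsCMS f p' q' ⊤ 0 u₂ du₂ φ₂ ∧ u₁ ≠ u₂)) ∧
    (∀ p' q' : ℝ, 1 < p' → p' ≤ 2 → 1 / p' + 1 / q' = 1 →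
      ∃ du φ : ℝ → ℝ, IsCMS f p' q' ⊤ 0 (fun _ => 0) du φ) := by
  intro f e
  refine ⟨plconvex_f, ?_, ?_, ?_⟩
  · show slope' (fun v : EuclideanSpace ℝ (Fin 2) => ((-(1 / 2) * ‖v‖ ^ 2 : ℝ) : EReal)) 0 = 0
    rw [slope_eq]
    simp
  · intro p' q' hp hpq
    have hp0 : (0:ℝ) < p' := by linarith
    have hp'ne : p' ≠ 0 := ne_of_gt hp0
    have hq'ne : q' ≠ 0 := by
      intro h
      subst h
      have : p' = 1 := by field_simp at hpq; simp at hpq; linarith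
      linarith
    have key : p' + q' = p' * q' := by field_simp at hpq; linarith
    have hq1 : 1 < q' := by nlinarith
    have hq2 : q' < 2 := by nlinarith
    have hαq : 1 - q' / p' = 2 - q' := by
      have h1 : q' / p' = q' - 1 := by rw [div_eq_iff hp'ne]; nlinarith
      rw [h1]; ring
    have hα0 : 0 < 1 - q' / p' := by rw [hαq]; linarith
    refine ⟨⟨hα0, by rw [hαq]; linarith⟩, ?_, ?_⟩
    · intro θ _
      exact isCMS_curve p' q' hp hpq (e θ) (normE θ)
    · obtain ⟨du2, φ2, h2⟩ := isCMS_curve p' q' hp hpq (e 0) (normE 0)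
      obtain ⟨du1, φ1, h1⟩ := isCMS_const p' q' (by linarith) hpq
      refine ⟨_, _, du1, φ1, du2, φ2, h1, h2, ?_⟩
      intro h
      have h3 := congrFun h 1
      have h4 := congrArg norm h3
      rw [norm_zero, norm_smul, normE, mul_one, Real.norm_eq_abs, mul_one] at h4
      have h5 : 0 < (1 - q' / p') ^ (1 / (1 - q' / p')) := Real.rpow_pos_of_pos hα0 _
      rw [abs_of_pos h5] at h4
      linarith
  · intro p' q' hp _ hpq
    exact isCMS_const p' q' hp hpq
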